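/- Let D : ℝⁿ → ℝⁿ be a diagonal linear map with all diagonal entries d₁,…,dₙ strictly positive, and suppose there is a function c : ℝⁿ → (0,∞) such that g₀(Dx)(Dv,Dw) = c(x) · g₀(x)(v,w) for all x,v,w ∈ ℝⁿ. Then there exists λ = (α,β) ∈ ℝ² such that D = φ_λ, i.e. (d₁,…,dₙ) = (e^{−α+2β}, e^{3α}, e^{2α−β}, e^{3β}, e^{α+β}, …, e^{α+β}), and c is constant equal to e^{2(α+β)}. -/
import Mathlib


/-- The symmetric bilinear form `g₀(x)(v,w) = v₁w₂ + v₂w₁ + x₃²v₁w₁ + v₃w₄ + v₄w₃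
    + Σ_{j=5}^{n} ε_j v_j w_j` (1-based indices; here indices are 0-based),
    where `ε_j = 1` for positions `5 ≤ j ≤ 4+s` and `ε_j = -1` otherwise. -/
def g0 (n : ℕ) (hn : 4 ≤ n) (s : ℕ) (x v w : Fin n → ℝ) : ℝ :=
  v ⟨0, by omega⟩ * w ⟨1, by omega⟩ + v ⟨1, by omega⟩ * w ⟨0, by omega⟩
    + (x ⟨2, by omega⟩) ^ 2 * v ⟨0, by omega⟩ * w ⟨0, by omega⟩
    + v ⟨2, by omega⟩ * w ⟨3, by omega⟩ + v ⟨3, by omega⟩ * w ⟨2, by omega⟩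
    + ∑ j : Fin n, if 4 ≤ (j : ℕ) then
        (if (j : ℕ) < 4 + s then (1 : ℝ) else -1) * v j * w j else 0

/-- The diagonal entries of the linear map `φ_λ`, `λ = (α,β)`:
`(e^{-α+2β}, e^{3α}, e^{2α-β}, e^{3β}, e^{α+β}, …, e^{α+β})` (0-based position `j`). -/
noncomputable def phiDiag (α β : ℝ) (j : ℕ) : ℝ :=
  if j = 0 then Real.exp (-α + 2 * β)
  else if j = 1 then Real.exp (3 * α)
  else if j = 2 then Real.exp (2 * α - β)
  else if j = 3 then Real.exp (3 * β)
  else Real.exp (α + β)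

set_option maxHeartbeats 1000000 in
/-- Any diagonal linear map `D` with positive diagonal entries which is conformal for `g₀`
    (with some positive factor `c`) is of the form `φ_λ` for some `λ = (α,β) ∈ ℝ²`,
    and the factor is the constant `e^{2(α+β)}`. -/
theorem diagonal_conformal_eq_phi (p q : ℕ) (hp : 2 ≤ p) (hpq : p ≤ q) (hq : 2 < q)
    (d : Fin (p + q) → ℝ) (hd : ∀ j, 0 < d j)
    (c : (Fin (p + q) → ℝ) → ℝ) (hc : ∀ x, 0 < c x)
    (h : ∀ x v w : Fin (p + q) → ℝ,
      g0 (p + q) (by omega) (q - 2)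
          (fun j => d j * x j) (fun j => d j * v j) (fun j => d j * w j)
        = c x * g0 (p + q) (by omega) (q - 2) x v w) :
    ∃ α β : ℝ, (∀ j : Fin (p + q), d j = phiDiag α β (j : ℕ)) ∧
      (∀ x : Fin (p + q) → ℝ, c x = Real.exp (2 * (α + β))) := by
  have h5 : 5 ≤ p + q := by omega
  set i0 : Fin (p+q) := ⟨0, by omega⟩ with hi0
  set i1 : Fin (p+q) := ⟨1, by omega⟩ with hi1
  set i2 : Fin (p+q) := ⟨2, by omega⟩ with hi2
  set i3 : Fin (p+q) := ⟨3, by omega⟩ with hi3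
  have v0 : (i0:ℕ) = 0 := rfl
  have v1 : (i1:ℕ) = 1 := rfl
  have v2 : (i2:ℕ) = 2 := rfl
  have v3 : (i3:ℕ) = 3 := rfl
  have sumzeroD : ∀ (u v : Fin (p+q)), (u:ℕ) < 4 →
      ∑ j : Fin (p+q), (if 4 ≤ (j:ℕ) then
        (if (j:ℕ) < 4 + (q-2) then (1:ℝ) else -1) * (d j * if j = u then 1 else 0)
          * (d j * if j = v then 1 else 0) else 0) = 0 := by
    intro u v hu
    apply Finset.sum_eq_zero
    intro j _
    by_cases hj : 4 ≤ (j:ℕ)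
    · have : j ≠ u := by intro e; subst e; omega
      simp [hj, this]
    · simp [hj]
  have sumzero1 : ∀ (u v : Fin (p+q)), (u:ℕ) < 4 →
      ∑ j : Fin (p+q), (if 4 ≤ (j:ℕ) then
        ((if (j:ℕ) < 4 + (q-2) then (1:ℝ) else -1) * if j = u then 1 else 0)
          * (if j = v then 1 else 0) else 0) = 0 := by
    intro u v hu
    apply Finset.sum_eq_zero
    intro j _
    by_cases hj : 4 ≤ (j:ℕ)
    · have : j ≠ u := by intro e; subst e; omega
      simp [hj, this]
    · simp [hj]
  have hA : ∀ x : Fin (p+q) → ℝ, d i0 * d i1 = c x := by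
    intro x
    have H := h x (fun k => if k = i0 then 1 else 0) (fun k => if k = i1 then 1 else 0)
    simp only [g0] at H
    rw [sumzeroD i0 i1 (by omega), sumzero1 i0 i1 (by omega)] at H
    simp [hi0, hi1, hi2, hi3, Fin.ext_iff] at H
    linarith [H]
  have hB : ∀ x : Fin (p+q) → ℝ, d i2 * d i3 = c x := by
    intro x
    have H := h x (fun k => if k = i2 then 1 else 0) (fun k => if k = i3 then 1 else 0)
    simp only [g0] at H
    rw [sumzeroD i2 i3 (by omega), sumzero1 i2 i3 (by omega)] at H
    simp [hi0, hi1, hi2, hi3, Fin.ext_iff] at H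
    linarith [H]
  have hC : (d i2)^2 * (d i0)^2 = c (fun _ => 1) := by
    have H := h (fun _ => 1) (fun k => if k = i0 then 1 else 0) (fun k => if k = i0 then 1 else 0)
    simp only [g0] at H
    rw [sumzeroD i0 i0 (by omega), sumzero1 i0 i0 (by omega)] at H
    simp [hi0, hi1, hi2, hi3, Fin.ext_iff] at H
    nlinarith [H]
  have hE : ∀ (x : Fin (p+q) → ℝ) (u : Fin (p+q)), 4 ≤ (u:ℕ) → (d u)^2 = c x := by
    intro x u hu
    have H := h x (fun k => if k = u then 1 else 0) (fun k => if k = u then 1 else 0)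
    simp only [g0] at H
    have hs1 : ∑ j : Fin (p+q), (if 4 ≤ (j:ℕ) then
        (if (j:ℕ) < 4 + (q-2) then (1:ℝ) else -1) * (d j * if j = u then 1 else 0)
          * (d j * if j = u then 1 else 0) else 0)
        = (if (u:ℕ) < 4 + (q-2) then (1:ℝ) else -1) * (d u)^2 := by
      rw [Finset.sum_eq_single u]
      · simp [hu]; ring
      · intro j _ hj
        by_cases h4 : 4 ≤ (j:ℕ)
        · simp [h4, hj]
        · simp [h4]
      · simp
    have hs2 : ∑ j : Fin (p+q), (if 4 ≤ (j:ℕ) then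
        ((if (j:ℕ) < 4 + (q-2) then (1:ℝ) else -1) * if j = u then 1 else 0)
          * (if j = u then 1 else 0) else 0)
        = (if (u:ℕ) < 4 + (q-2) then (1:ℝ) else -1) := by
      rw [Finset.sum_eq_single u]
      · simp [hu]
      · intro j _ hj
        by_cases h4 : 4 ≤ (j:ℕ)
        · simp [h4, hj]
        · simp [h4]
      · simp
    rw [hs1, hs2] at H
    simp [Fin.ext_iff, show ¬((0:ℕ) = (u:ℕ)) from by omega,
      show ¬((1:ℕ) = (u:ℕ)) from by omega, show ¬((2:ℕ) = (u:ℕ)) from by omega,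
      show ¬((3:ℕ) = (u:ℕ)) from by omega] at H
    by_cases hlt : (u:ℕ) < 4 + (q-2)
    · simp [hlt] at H; linarith
    · simp [hlt] at H; linarith
  -- logs
  have f1 : d i2 * d i3 = d i0 * d i1 := (hB (fun _ => 0)).trans (hA (fun _ => 0)).symm
  have f2 : Real.log (d i2) + Real.log (d i3) = Real.log (d i0) + Real.log (d i1) := by
    rw [← Real.log_mul (ne_of_gt (hd _)) (ne_of_gt (hd _)),
        ← Real.log_mul (ne_of_gt (hd _)) (ne_of_gt (hd _)), f1]
  have f3 : 2 * Real.log (d i0) + 2 * Real.log (d i2)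
      = Real.log (d i0) + Real.log (d i1) := by
    have e : (d i0 * d i2)^2 = d i0 * d i1 := by
      have h1 := hC; have h2 := hA (fun _ => 1); nlinarith
    have e2 := congrArg Real.log e
    rw [Real.log_pow, Real.log_mul (ne_of_gt (hd _)) (ne_of_gt (hd _)),
        Real.log_mul (ne_of_gt (hd _)) (ne_of_gt (hd _))] at e2
    push_cast at e2; linarith
  clear h sumzeroD sumzero1 hB hC f1
  obtain ⟨α, hα⟩ : ∃ a : ℝ, a = Real.log (d i1) / 3 := ⟨_, rfl⟩
  obtain ⟨β, hβ⟩ : ∃ b : ℝ, b = Real.log (d i3) / 3 := ⟨_, rfl⟩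
  have lemL : Real.log (d i0) + Real.log (d i1) = 2 * (α + β) := by
    rw [hα, hβ]; linarith
  refine ⟨α, β, ?_, ?_⟩
  · rintro ⟨jv, hjlt⟩
    have hcase : jv = 0 ∨ jv = 1 ∨ jv = 2 ∨ jv = 3 ∨ 4 ≤ jv := by omega
    rcases hcase with rfl | rfl | rfl | rfl | h4
    · show d i0 = phiDiag α β 0
      rw [← Real.exp_log (hd i0)]
      simp only [phiDiag, if_pos rfl]
      congr 1; linarith
    · show d i1 = phiDiag α β 1
      rw [← Real.exp_log (hd i1)]
      simp only [phiDiag]; norm_num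
      congr 1; linarith
    · show d i2 = phiDiag α β 2
      rw [← Real.exp_log (hd i2)]
      simp only [phiDiag]; norm_num
      congr 1; linarith
    · show d i3 = phiDiag α β 3
      rw [← Real.exp_log (hd i3)]
      simp only [phiDiag]; norm_num
      congr 1; linarith
    · have hsq : (d ⟨jv, hjlt⟩)^2 = d i0 * d i1 := by
        rw [hE (fun _ => 0) ⟨jv, hjlt⟩ h4]; exact (hA _).symm
      have e2 := congrArg Real.log hsq
      rw [Real.log_pow, Real.log_mul (ne_of_gt (hd _)) (ne_of_gt (hd _))] at e2
      push_cast at e2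
      have hlog : Real.log (d ⟨jv, hjlt⟩) = α + β := by linarith
      rw [← Real.exp_log (hd ⟨jv, hjlt⟩), hlog]
      simp [phiDiag, show jv ≠ 0 from by omega, show jv ≠ 1 from by omega,
        show jv ≠ 2 from by omega, show jv ≠ 3 from by omega]
  · intro x
    rw [← hA x, ← Real.exp_log (show (0:ℝ) < d i0 * d i1 from mul_pos (hd _) (hd _)),
      Real.log_mul (ne_of_gt (hd _)) (ne_of_gt (hd _)), lemL]
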